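/- Let m ≥ 2, let Skew(m,ℂ) = {V ∈ M_m(ℂ) : Vᵀ = −V} and let h : Skew(m,ℂ) × Skew(m,ℂ) → ℂ be sesquilinear (complex linear in the first variable, conjugate linear in the second) and Hermitian, and suppose h(AVAᵀ, AWAᵀ) = h(V,W) for all V, W ∈ Skew(m,ℂ) and all A ∈ U(m). Then there exists a real constant c such that h(V,W) = c · tr(V W*) for all V, W ∈ Skew(m,ℂ). -/

import Mathlib

open Matrix

namespace InvHermTypeIII

variable {m : ℕ}

def F (i j : Fin m) : Matrix (Fin m) (Fin m) ℂ :=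
  Matrix.single i j 1 - Matrix.single j i 1

lemma F_apply (i j x y : Fin m) :
    F i j x y = (if i = x ∧ j = y then (1:ℂ) else 0) - (if j = x ∧ i = y then 1 else 0) := by
  simp [F, Matrix.single]

lemma F_transpose (i j : Fin m) : (F i j)ᵀ = -(F i j) := by
  ext x y
  simp only [transpose_apply, Matrix.neg_apply, F_apply]
  rw [show (if i = y ∧ j = x then (1:ℂ) else 0) = (if j = x ∧ i = y then 1 else 0) from
        if_congr and_comm rfl rfl,
      show (if j = y ∧ i = x then (1:ℂ) else 0) = (if i = x ∧ j = y then 1 else 0) from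
        if_congr and_comm rfl rfl]
  ring

lemma F_symm (i j : Fin m) : F j i = -(F i j) := by
  ext x y
  simp only [Matrix.neg_apply, F_apply]
  ring

lemma F_smul_transpose (a : ℂ) (i j : Fin m) : (a • F i j)ᵀ = -(a • F i j) := by
  rw [transpose_smul, F_transpose, smul_neg]

lemma F_diag (i : Fin m) : F i i = 0 := by
  ext x y; simp [F_apply]

lemma sum_skew {ι : Type*} (s : Finset ι) (g : ι → Matrix (Fin m) (Fin m) ℂ)
    (hg : ∀ i ∈ s, (g i)ᵀ = -(g i)) : (∑ i ∈ s, g i)ᵀ = -(∑ i ∈ s, g i) := by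
  rw [transpose_sum, ← Finset.sum_neg_distrib]
  exact Finset.sum_congr rfl hg

lemma diag_conj_F (d : Fin m → ℂ) (i j : Fin m) :
    diagonal d * F i j * (diagonal d)ᵀ = (d i * d j) • F i j := by
  rw [diagonal_transpose]
  ext x y
  rw [mul_diagonal, diagonal_mul, Matrix.smul_apply, smul_eq_mul, F_apply]
  by_cases h1 : i = x ∧ j = y
  · obtain ⟨rfl, rfl⟩ := h1; split_ifs <;> ring
  · by_cases h2 : j = x ∧ i = y
    · obtain ⟨rfl, rfl⟩ := h2; split_ifs <;> ring
    · simp [h1, h2]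

lemma diag_unitary (d : Fin m → ℂ) (hd : ∀ t, d t = 1 ∨ d t = -1) :
    diagonal d ∈ Matrix.unitaryGroup (Fin m) ℂ := by
  rw [Matrix.mem_unitaryGroup_iff]
  have hsd : star d = d := by
    funext t
    rcases hd t with h | h <;> simp [Pi.star_apply, h]
  have h1 : star (diagonal d) = diagonal d := by
    rw [Matrix.star_eq_conjTranspose, diagonal_conjTranspose, hsd]
  rw [h1, diagonal_mul_diagonal]
  have h2 : (fun i => d i * d i) = fun _ => (1:ℂ) := by
    funext t
    rcases hd t with h | h <;> rw [h] <;> norm_num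
  rw [h2, diagonal_one]

def P (σ : Equiv.Perm (Fin m)) : Matrix (Fin m) (Fin m) ℂ :=
  Matrix.of fun x y => if σ.symm x = y then 1 else 0

lemma P_unitary (σ : Equiv.Perm (Fin m)) : P σ ∈ Matrix.unitaryGroup (Fin m) ℂ := by
  rw [Matrix.mem_unitaryGroup_iff]
  ext x y
  simp only [Matrix.mul_apply, P, Matrix.star_apply, Matrix.of_apply, apply_ite (star (R := ℂ)),
    star_one, star_zero, ite_mul, one_mul, zero_mul, Finset.sum_ite_eq, Finset.mem_univ, if_true,
    Matrix.one_apply]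
  simp [eq_comm]

lemma P_conj (σ : Equiv.Perm (Fin m)) (M : Matrix (Fin m) (Fin m) ℂ) :
    P σ * M * (P σ)ᵀ = Matrix.of fun x y => M (σ.symm x) (σ.symm y) := by
  ext x y
  simp only [Matrix.mul_apply, P, Matrix.transpose_apply, Matrix.of_apply, ite_mul, mul_ite,
    one_mul, mul_one, zero_mul, mul_zero, Finset.sum_ite_eq, Finset.mem_univ, if_true]

lemma P_conj_F (σ : Equiv.Perm (Fin m)) (a b : Fin m) :
    P σ * F a b * (P σ)ᵀ = F (σ a) (σ b) := by
  rw [P_conj]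
  ext x y
  simp [F_apply, Equiv.eq_symm_apply]

lemma skew_apply_symm {V : Matrix (Fin m) (Fin m) ℂ} (hV : Vᵀ = -V) (x y : Fin m) :
    V y x = -V x y := by
  have := congrFun (congrFun hV x) y
  simpa using this

lemma expand (V : Matrix (Fin m) (Fin m) ℂ) (hV : Vᵀ = -V) :
    V = ∑ p : Fin m × Fin m, (V p.1 p.2 / 2) • F p.1 p.2 := by
  ext x y
  rw [Matrix.sum_apply]
  have e1 : ∀ p : Fin m × Fin m, ((V p.1 p.2 / 2) • F p.1 p.2) x y =
      (if p = (x, y) then V p.1 p.2 / 2 else 0) - (if p = (y, x) then V p.1 p.2 / 2 else 0) := by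
    intro p
    rw [Matrix.smul_apply, smul_eq_mul, F_apply]
    simp only [Prod.ext_iff]
    split_ifs <;> (try ring) <;> tauto
  rw [Finset.sum_congr rfl fun p _ => e1 p, Finset.sum_sub_distrib,
      Finset.sum_ite_eq' Finset.univ ((x, y) : Fin m × Fin m),
      Finset.sum_ite_eq' Finset.univ ((y, x) : Fin m × Fin m)]
  simp only [Finset.mem_univ, if_true]
  rw [skew_apply_symm hV x y]
  ring

lemma trace_eq (V W : Matrix (Fin m) (Fin m) ℂ) :
    (V * Wᴴ).trace = ∑ p : Fin m × Fin m, V p.1 p.2 * starRingEnd ℂ (W p.1 p.2) := by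
  rw [Matrix.trace, Fintype.sum_prod_type]
  simp only [Matrix.diag_apply, Matrix.mul_apply, Matrix.conjTranspose_apply, starRingEnd_apply]

end InvHermTypeIII

open InvHermTypeIII

/-- every `U(m)`-invariant (under `V ↦ A V Aᵀ`) Hermitian sesquilinear form on
the skew-symmetric complex matrices (`m ≥ 2`) is a real constant multiple of
`(V,W) ↦ tr(V W*)`. -/
theorem invariant_hermitian_form_typeIII (m : ℕ) (hm : 2 ≤ m)
    (h : Matrix (Fin m) (Fin m) ℂ → Matrix (Fin m) (Fin m) ℂ → ℂ)
    (hadd₁ : ∀ V V' W : Matrix (Fin m) (Fin m) ℂ, Vᵀ = -V → V'ᵀ = -V' → Wᵀ = -W →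
      h (V + V') W = h V W + h V' W)
    (hsmul₁ : ∀ (a : ℂ) (V W : Matrix (Fin m) (Fin m) ℂ), Vᵀ = -V → Wᵀ = -W →
      h (a • V) W = a * h V W)
    (hadd₂ : ∀ V W W' : Matrix (Fin m) (Fin m) ℂ, Vᵀ = -V → Wᵀ = -W → W'ᵀ = -W' →
      h V (W + W') = h V W + h V W')
    (hsmul₂ : ∀ (a : ℂ) (V W : Matrix (Fin m) (Fin m) ℂ), Vᵀ = -V → Wᵀ = -W →
      h V (a • W) = starRingEnd ℂ a * h V W)
    (hherm : ∀ V W : Matrix (Fin m) (Fin m) ℂ, Vᵀ = -V → Wᵀ = -W →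
      h W V = starRingEnd ℂ (h V W))
    (hinv : ∀ V W : Matrix (Fin m) (Fin m) ℂ, Vᵀ = -V → Wᵀ = -W →
      ∀ A ∈ Matrix.unitaryGroup (Fin m) ℂ, h (A * V * Aᵀ) (A * W * Aᵀ) = h V W) :
    ∃ c : ℝ, ∀ V W : Matrix (Fin m) (Fin m) ℂ, Vᵀ = -V → Wᵀ = -W →
      h V W = (c : ℂ) * (V * Wᴴ).trace := by
  classical
  set i0 : Fin m := ⟨0, by omega⟩ with hi0
  set i1 : Fin m := ⟨1, by omega⟩ with hi1
  have hne : i0 ≠ i1 := by simp [hi0, hi1, Fin.ext_iff]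
  -- zero lemmas
  have h0₁ : ∀ W : Matrix (Fin m) (Fin m) ℂ, Wᵀ = -W → h 0 W = 0 := by
    intro W hW
    have := hsmul₁ 0 0 W (by simp) hW
    simpa using this
  have h0₂ : ∀ V : Matrix (Fin m) (Fin m) ℂ, Vᵀ = -V → h V 0 = 0 := by
    intro V hV
    have := hsmul₂ 0 V 0 hV (by simp)
    simpa using this
  -- sum linearity
  have hsum₁ : ∀ (s : Finset (Fin m × Fin m)) (g : Fin m × Fin m → Matrix (Fin m) (Fin m) ℂ)
      (W : Matrix (Fin m) (Fin m) ℂ), (∀ p, (g p)ᵀ = -(g p)) → Wᵀ = -W →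
      h (∑ p ∈ s, g p) W = ∑ p ∈ s, h (g p) W := by
    intro s g W hg hW
    induction s using Finset.induction_on with
    | empty => simpa using h0₁ W hW
    | insert _ _ hx ih =>
        rw [Finset.sum_insert hx, Finset.sum_insert hx,
          hadd₁ _ _ _ (hg _) (sum_skew _ _ fun p _ => hg p) hW, ih]
  have hsum₂ : ∀ (s : Finset (Fin m × Fin m)) (g : Fin m × Fin m → Matrix (Fin m) (Fin m) ℂ)
      (V : Matrix (Fin m) (Fin m) ℂ), (∀ p, (g p)ᵀ = -(g p)) → Vᵀ = -V →
      h V (∑ p ∈ s, g p) = ∑ p ∈ s, h V (g p) := by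
    intro s g V hg hV
    induction s using Finset.induction_on with
    | empty => simpa using h0₂ V hV
    | insert _ _ hx ih =>
        rw [Finset.sum_insert hx, Finset.sum_insert hx,
          hadd₂ _ _ _ hV (hg _) (sum_skew _ _ fun p _ => hg p), ih]
  -- sign trick
  have hsign : ∀ (d : Fin m → ℂ), (∀ t, d t = 1 ∨ d t = -1) → ∀ i j k l : Fin m,
      h (F i j) (F k l) = (d i * d j * (d k * d l)) * h (F i j) (F k l) := by
    intro d hd i j k l
    have hu := diag_unitary d hd
    have hc : ∀ t, starRingEnd ℂ (d t) = d t := by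
      intro t; rcases hd t with h' | h' <;> simp [h']
    have heq := hinv (F i j) (F k l) (F_transpose i j) (F_transpose k l) (diagonal d) hu
    rw [diag_conj_F, diag_conj_F,
      hsmul₁ _ _ _ (F_transpose i j) (F_smul_transpose _ _ _),
      hsmul₂ _ _ _ (F_transpose i j) (F_transpose k l), _root_.map_mul, hc, hc] at heq
    linear_combination -heq
  -- vanishing when x lies in {i,j} but not {k,l}
  have haux : ∀ i j k l x : Fin m, i ≠ j → (x = i ∨ x = j) → x ≠ k → x ≠ l →
      h (F i j) (F k l) = 0 := by
    intro i j k l x hij hx hxk hxl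
    have hd : ∀ t : Fin m, (if t = x then (-1:ℂ) else 1) = 1 ∨
        (if t = x then (-1:ℂ) else 1) = -1 := by
      intro t; by_cases h' : t = x <;> simp [h']
    have hs := hsign (fun t => if t = x then (-1:ℂ) else 1) hd i j k l
    have hk : (if k = x then (-1:ℂ) else 1) = 1 := if_neg (fun h' => hxk h'.symm)
    have hl : (if l = x then (-1:ℂ) else 1) = 1 := if_neg (fun h' => hxl h'.symm)
    have hijv : (if i = x then (-1:ℂ) else 1) * (if j = x then (-1:ℂ) else 1) = -1 := by
      rcases hx with h' | h'
      · rw [if_pos h'.symm, if_neg (fun hj => hij (hj.trans h').symm)]; norm_num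
      · rw [if_pos h'.symm, if_neg (fun hi => hij (hi.trans h'))]; norm_num
    rw [hijv, hk, hl] at hs
    linear_combination hs / 2
  -- full orthogonality
  have horth : ∀ i j k l : Fin m, i ≠ j → (k, l) ≠ (i, j) → (k, l) ≠ (j, i) →
      h (F i j) (F k l) = 0 := by
    intro i j k l hij h1 h2
    by_cases hik : i = k
    · subst hik
      refine haux i j i l j hij (Or.inr rfl) (fun h' => hij h'.symm) fun h' => ?_
      exact h1 (by rw [h'])
    · by_cases hil : i = l
      · subst hil
        refine haux i j k i j hij (Or.inr rfl) (fun h' => ?_) fun h' => hij h'.symm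
        exact h2 (by rw [h'])
      · exact haux i j k l i hij (Or.inl rfl) hik hil
  -- permutation invariance
  have hperm : ∀ (σ : Equiv.Perm (Fin m)) (a b : Fin m),
      h (F (σ a) (σ b)) (F (σ a) (σ b)) = h (F a b) (F a b) := by
    intro σ a b
    have := hinv (F a b) (F a b) (F_transpose a b) (F_transpose a b) (P σ) (P_unitary σ)
    rwa [P_conj_F] at this
  have hgamma : ∀ i j : Fin m, i ≠ j → h (F i j) (F i j) = h (F i0 i1) (F i0 i1) := by
    intro i j hij
    have hj' : i0 ≠ (Equiv.swap i0 i).symm j := by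
      intro h'
      have := congrArg (Equiv.swap i0 i) h'
      rw [Equiv.apply_symm_apply, Equiv.swap_apply_left] at this
      exact hij this
    set σ : Equiv.Perm (Fin m) :=
      (Equiv.swap i1 ((Equiv.swap i0 i).symm j)).trans (Equiv.swap i0 i) with hσ
    have h0 : σ i0 = i := by
      rw [hσ, Equiv.trans_apply, Equiv.swap_apply_of_ne_of_ne hne hj', Equiv.swap_apply_left]
    have h1 : σ i1 = j := by
      rw [hσ, Equiv.trans_apply, Equiv.swap_apply_left, Equiv.apply_symm_apply]
    rw [← h0, ← h1]
    exact hperm σ i0 i1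
  set γ : ℂ := h (F i0 i1) (F i0 i1) with hγ
  have hγc : starRingEnd ℂ γ = γ := by
    rw [hγ]
    exact (hherm _ _ (F_transpose i0 i1) (F_transpose i0 i1)).symm
  have hγre : ((γ.re : ℝ) : ℂ) = γ := Complex.conj_eq_iff_re.mp hγc
  -- values on basis elements
  have gval : ∀ p q : Fin m × Fin m,
      h (F p.1 p.2) (F q.1 q.2) =
        γ * ((if q = p then 1 else 0) - (if q = (p.2, p.1) then 1 else 0)) := by
    intro p q
    by_cases hp : p.1 = p.2
    · have hF0 : F p.1 p.2 = 0 := by rw [hp, F_diag]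
      have hswap : (p.2, p.1) = p := by
        conv_rhs => rw [← Prod.mk.eta (p := p)]
        rw [hp]
      rw [hF0, h0₁ _ (F_transpose q.1 q.2), hswap, sub_self, mul_zero]
    · by_cases hq1 : q = p
      · rw [hq1, if_pos rfl, if_neg (fun h' => hp (congrArg Prod.snd h').symm),
          hgamma p.1 p.2 hp]
        ring
      · by_cases hq2 : q = (p.2, p.1)
        · rw [hq2, if_neg (fun h' => hp (congrArg Prod.snd h')),
            if_pos rfl]
          have hFs : F (p.2, p.1).1 (p.2, p.1).2 = (-1 : ℂ) • F p.1 p.2 := by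
            show F p.2 p.1 = _
            rw [F_symm]; simp
          rw [hFs, hsmul₂ _ _ _ (F_transpose p.1 p.2) (F_transpose p.1 p.2),
            hgamma p.1 p.2 hp]
          simp
        · rw [if_neg hq1, if_neg hq2,
            horth p.1 p.2 q.1 q.2 hp (by simpa [Prod.ext_iff] using hq1)
              (by simpa [Prod.ext_iff] using hq2)]
          ring
  refine ⟨γ.re / 2, ?_⟩
  intro V W hV hW
  -- expansion of h (F p) W
  have hFW : ∀ p : Fin m × Fin m, h (F p.1 p.2) W =
      (starRingEnd ℂ (W p.1 p.2 / 2) - starRingEnd ℂ (W p.2 p.1 / 2)) * γ := by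
    intro p
    conv_lhs => rw [expand W hW]
    rw [hsum₂ Finset.univ _ _ (fun q => F_smul_transpose _ _ _) (F_transpose p.1 p.2)]
    have e2 : ∀ q : Fin m × Fin m, h (F p.1 p.2) ((W q.1 q.2 / 2) • F q.1 q.2)
        = starRingEnd ℂ (W q.1 q.2 / 2) *
            (γ * ((if q = p then 1 else 0) - (if q = (p.2, p.1) then 1 else 0))) := by
      intro q
      rw [hsmul₂ _ _ _ (F_transpose p.1 p.2) (F_transpose q.1 q.2), gval p q]
    rw [Finset.sum_congr rfl fun q _ => e2 q]
    simp only [mul_sub, mul_ite, mul_one, mul_zero]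
    rw [Finset.sum_sub_distrib, Finset.sum_ite_eq' Finset.univ p,
      Finset.sum_ite_eq' Finset.univ ((p.2, p.1) : Fin m × Fin m)]
    simp only [Finset.mem_univ, if_true]
    ring
  have key : h V W = γ / 2 * (V * Wᴴ).trace := by
    conv_lhs => rw [expand V hV]
    rw [hsum₁ Finset.univ _ W (fun p => F_smul_transpose _ _ _) hW]
    have e3 : ∀ p : Fin m × Fin m,
        h ((V p.1 p.2 / 2) • F p.1 p.2) W = γ / 2 * (V p.1 p.2 * starRingEnd ℂ (W p.1 p.2)) := by
      intro p
      rw [hsmul₁ _ _ _ (F_transpose p.1 p.2) hW, hFW p, skew_apply_symm hW p.1 p.2]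
      rw [map_div₀, map_div₀, map_neg, map_ofNat]
      ring
    rw [Finset.sum_congr rfl fun p _ => e3 p, ← Finset.mul_sum, ← trace_eq]
  rw [key]
  congr 1
  push_cast
  rw [hγre]
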